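/- Every involution σ of an algebraically closed field k of characteristic 0 induces a non-identity automorphism of the algebraic closure of ℚ inside k: σ maps the subfield of elements of k that are algebraic over ℚ onto itself, and the restriction of σ to this subfield is not the identity. -/
import Mathlib

private lemma alg_map {k : Type*} [Field k] [CharZero k] (σ : k ≃+* k) {x : k}
    (hx : IsAlgebraic ℚ x) : IsAlgebraic ℚ (σ x) := by
  obtain ⟨p, hp, hev⟩ := hx
  refine ⟨p, hp, ?_⟩
  have h2 : σ.toRingHom.toRatAlgHom x = σ x := rfl
  have := Polynomial.aeval_algHom_apply σ.toRingHom.toRatAlgHom x p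
  rw [hev, map_zero, h2] at this
  exact this

theorem stmt_8 (k : Type*) [Field k] [IsAlgClosed k] [CharZero k]
    (σ : k ≃+* k) (hinv : ∀ x, σ (σ x) = x) (hne : σ ≠ RingEquiv.refl k) :
    σ '' {x : k | IsAlgebraic ℚ x} = {x : k | IsAlgebraic ℚ x} ∧
    ∃ x : k, IsAlgebraic ℚ x ∧ σ x ≠ x := by
  constructor
  · ext x
    constructor
    · rintro ⟨y, hy, rfl⟩
      exact alg_map σ hy
    · intro hx
      refine ⟨σ x, alg_map σ hx, hinv x⟩
  · by_contra h
    push_neg at h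
    -- σ fixes every algebraic element
    obtain ⟨y, hy⟩ : ∃ y : k, σ y ≠ y := by
      by_contra h'
      push_neg at h'
      exact hne (RingEquiv.ext h')
    set z : k := y - σ y with hz
    have hz0 : z ≠ 0 := sub_ne_zero.mpr (Ne.symm hy)
    have hσz : σ z = -z := by
      simp only [hz, map_sub, hinv y]; ring
    -- get i with i^2 = -1
    obtain ⟨i, hi⟩ := IsAlgClosed.exists_pow_nat_eq (-1 : k) zero_lt_two
    have hialg : IsAlgebraic ℚ i := by
      refine ⟨Polynomial.X ^ 2 + Polynomial.C 1, Polynomial.X_pow_add_C_ne_zero zero_lt_two 1, by simp [hi]⟩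
    have hσi : σ i = i := h i hialg
    obtain ⟨r, hr⟩ := IsAlgClosed.exists_pow_nat_eq z zero_lt_two
    have hr0 : r ≠ 0 := by
      intro hc; rw [hc] at hr; simp at hr; exact hz0 hr.symm
    have key : (σ r) ^ 2 = (i * r) ^ 2 := by
      rw [← map_pow, hr, hσz, ← hr, mul_pow, hi]; ring
    rcases ((Commute.all _ _).sq_eq_sq_iff_eq_or_eq_neg).mp key with h1 | h1
    · have := hinv r
      rw [h1, map_mul, hσi, h1] at this
      have : (i ^ 2) * r = r := by rw [sq]; linear_combination this
      rw [hi] at this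
      have : (2 : k) * r = 0 := by linear_combination -this
      rcases mul_eq_zero.mp this with h2 | h2
      · exact two_ne_zero h2
      · exact hr0 h2
    · have := hinv r
      rw [h1, map_neg, map_mul, hσi, h1] at this
      have : (i ^ 2) * r = r := by rw [sq]; linear_combination this
      rw [hi] at this
      have : (2 : k) * r = 0 := by linear_combination -this
      rcases mul_eq_zero.mp this with h2 | h2
      · exact two_ne_zero h2
      · exact hr0 h2
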